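/- Let (Ω, 𝔽, P) be a probability space, g : Ω → ℝ^d a random vector with each g(i) and g(i)² integrable, w, w* ∈ ℝ^d fixed, and E[g(i)²] > 0 for each i. Define α(i) = E[g(i)·(w(i) − w*(i))] / E[g(i)²] and let D = Diag(α). Then E‖(w − D·g) − w*‖² = E‖w − w*‖² − Σ_{i=1}^d α(i)²·E[g(i)²]. In particular the expected squared distance strictly decreases whenever some α(i) ≠ 0, regardless of the signs of the entries α(i). -/

import Mathlib

open Matrix MeasureTheory

/-- The Euclidean norm of a vector in `ℝ^d`. -/
noncomputable def euclidNorm {d : ℕ} (v : Fin d → ℝ) : ℝ :=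
  ‖(EuclideanSpace.equiv (Fin d) ℝ).symm v‖

lemma enorm_sq {d : ℕ} (v : Fin d → ℝ) : euclidNorm v ^ 2 = ∑ i, v i ^ 2 := by
  rw [euclidNorm, EuclideanSpace.norm_eq, Real.sq_sqrt (by positivity)]
  simp [sq_abs]

/-- With the ideal component step-sizes `α(i) = E[g(i)·(w(i) - w*(i))]/E[g(i)²]` and
`D = Diag(α)`, one has `E‖(w - D·g) - w*‖² = E‖w - w*‖² - Σᵢ α(i)²·E[g(i)²]`; in particular
the expected squared distance strictly decreases whenever some `α(i) ≠ 0`, regardless of the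
signs of the entries `α(i)`. -/
theorem stmt_6 {d : ℕ} {Ω : Type*} [MeasurableSpace Ω] (P : Measure Ω)
    [IsProbabilityMeasure P] (g : Ω → Fin d → ℝ)
    (hint1 : ∀ i, Integrable (fun ω => g ω i) P)
    (hint2 : ∀ i, Integrable (fun ω => (g ω i) ^ 2) P)
    (w wstar : Fin d → ℝ)
    (hpos : ∀ i, 0 < ∫ ω, (g ω i) ^ 2 ∂P)
    (α : Fin d → ℝ)
    (hα : ∀ i, α i = (∫ ω, g ω i * (w i - wstar i) ∂P) / ∫ ω, (g ω i) ^ 2 ∂P) :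
    (∫ ω, euclidNorm ((w - (Matrix.diagonal α).mulVec (g ω)) - wstar) ^ 2 ∂P)
        = (∫ (_ : Ω), euclidNorm (w - wstar) ^ 2 ∂P)
          - ∑ i, (α i) ^ 2 * ∫ ω, (g ω i) ^ 2 ∂P
      ∧ ((∃ i, α i ≠ 0) →
          (∫ ω, euclidNorm ((w - (Matrix.diagonal α).mulVec (g ω)) - wstar) ^ 2 ∂P)
            < (∫ (_ : Ω), euclidNorm (w - wstar) ^ 2 ∂P)) := by
  have key : ∀ i, α i * ∫ ω, (g ω i) ^ 2 ∂P = (∫ ω, g ω i ∂P) * (w i - wstar i) := by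
    intro i
    rw [hα i, div_mul_cancel₀ _ (hpos i).ne', MeasureTheory.integral_mul_const]
  have hdecomp : ∀ i, (fun ω => (w i - wstar i - α i * g ω i) ^ 2)
      = fun ω => ((w i - wstar i) ^ 2 + (-(2 * (w i - wstar i) * α i)) * g ω i)
          + (α i) ^ 2 * (g ω i) ^ 2 := by
    intro i; funext ω; ring
  have hInt : ∀ i, Integrable (fun ω => (w i - wstar i - α i * g ω i) ^ 2) P := by
    intro i
    rw [hdecomp i]
    exact ((integrable_const _).add ((hint1 i).const_mul _)).add ((hint2 i).const_mul _)
  have hval : ∀ i, (∫ ω, (w i - wstar i - α i * g ω i) ^ 2 ∂P)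
      = (w i - wstar i) ^ 2 - (α i) ^ 2 * ∫ ω, (g ω i) ^ 2 ∂P := by
    intro i
    have hf1 : Integrable (fun ω => (w i - wstar i) ^ 2
        + (-(2 * (w i - wstar i) * α i)) * g ω i) P :=
      (integrable_const _).add ((hint1 i).const_mul _)
    have hf0 : Integrable (fun _ : Ω => (w i - wstar i) ^ 2) P := integrable_const _
    rw [hdecomp i, integral_add hf1 ((hint2 i).const_mul _), integral_add hf0
        ((hint1 i).const_mul _),
      integral_const, integral_const_mul, integral_const_mul]
    simp only [probReal_univ, measure_univ, ENNReal.toReal_one, one_smul]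
    linear_combination 2 * α i * key i
  have hconst : (∫ (_ : Ω), euclidNorm (w - wstar) ^ 2 ∂P) = ∑ i, (w i - wstar i) ^ 2 := by
    rw [integral_const]
    simp [enorm_sq]
  have h1 : (∫ ω, euclidNorm ((w - (Matrix.diagonal α).mulVec (g ω)) - wstar) ^ 2 ∂P)
      = (∫ (_ : Ω), euclidNorm (w - wstar) ^ 2 ∂P)
          - ∑ i, (α i) ^ 2 * ∫ ω, (g ω i) ^ 2 ∂P := by
    calc (∫ ω, euclidNorm ((w - (Matrix.diagonal α).mulVec (g ω)) - wstar) ^ 2 ∂P)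
        = ∫ ω, ∑ i, (w i - wstar i - α i * g ω i) ^ 2 ∂P := by
          congr 1; funext ω; rw [enorm_sq]
          refine Finset.sum_congr rfl fun i _ => ?_
          simp [Matrix.mulVec_diagonal]
          ring
      _ = ∑ i, ∫ ω, (w i - wstar i - α i * g ω i) ^ 2 ∂P :=
          integral_finset_sum _ fun i _ => hInt i
      _ = ∑ i, ((w i - wstar i) ^ 2 - (α i) ^ 2 * ∫ ω, (g ω i) ^ 2 ∂P) :=
          Finset.sum_congr rfl fun i _ => hval i
      _ = _ := by rw [Finset.sum_sub_distrib, hconst]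
  refine ⟨h1, fun ⟨i, hi⟩ => ?_⟩
  rw [h1]
  have hsum : 0 < ∑ i, (α i) ^ 2 * ∫ ω, (g ω i) ^ 2 ∂P := by
    refine Finset.sum_pos' (fun j _ => by positivity) ⟨i, Finset.mem_univ i, ?_⟩
    exact mul_pos (by positivity) (hpos i)
  linarith
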